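/- Converse bound for universal LDCs: for every integer K ≥ 1, N ≥ 1 and every universal locally decodable code (ULDC) with locality N, K source symbols of entropy L_w each, and M coded symbols of entropy L_x each, one has (1 + N + N² + ⋯ + N^{K−1})·L_w ≤ N^K·L_x; equivalently, the symbol rate satisfies R_s = L_w/L_x ≤ C*(N,K) = N·(1 + 1/N + 1/N² + ⋯ + 1/N^{K−1})^{−1}. -/

import Mathlib

open scoped BigOperators

noncomputable section

/-- A finite probability space: a finite type together with a probability mass function. -/
structure FinProbSpace where
  Ω : Type
  [fin : Fintype Ω]
  p : Ω → ℝ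
  nonneg : ∀ ω, 0 ≤ p ω
  sum_one : ∑ ω, p ω = 1

attribute [instance] FinProbSpace.fin

namespace FinProbSpace

variable (P : FinProbSpace)

/-- Probability that the random variable `X` takes the value `a`. -/
def prob {α : Type} [DecidableEq α] (X : P.Ω → α) (a : α) : ℝ :=
  ∑ ω, if X ω = a then P.p ω else 0

/-- Shannon entropy (in bits) of a finitely valued random variable. -/
def H {α : Type} [Fintype α] [DecidableEq α] (X : P.Ω → α) : ℝ :=
  ∑ a, -(P.prob X a * Real.logb 2 (P.prob X a))

/-- Conditional Shannon entropy `H(X | Y) = H(X, Y) - H(Y)` (in bits). -/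
def condH {α β : Type} [Fintype α] [DecidableEq α] [Fintype β] [DecidableEq β]
    (X : P.Ω → α) (Y : P.Ω → β) : ℝ :=
  P.H (fun ω => (X ω, Y ω)) - P.H Y

/-- The tuple random variable `(X_i)_{i ∈ ι}`. -/
def tuple {ι V : Type} (X : ι → P.Ω → V) : P.Ω → ι → V := fun ω i => X i ω

/-- Joint (mutual) independence of a finite family of random variables. -/
def iIndep {ι V : Type} [Fintype ι] [DecidableEq ι] [DecidableEq V] (X : ι → P.Ω → V) : Prop :=
  ∀ a : ι → V, P.prob (P.tuple X) a = ∏ i, P.prob (X i) (a i)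

/-- `X` and `Y` contain the same information about everything beyond `Z`:
`H(X | Y, Z) = H(Y | X, Z) = 0`. -/
def sameInfo {α β γ : Type} [Fintype α] [DecidableEq α] [Fintype β] [DecidableEq β]
    [Fintype γ] [DecidableEq γ] (X : P.Ω → α) (Y : P.Ω → β) (Z : P.Ω → γ) : Prop :=
  P.condH X (fun ω => (Y ω, Z ω)) = 0 ∧ P.condH Y (fun ω => (X ω, Z ω)) = 0

end FinProbSpace

/-- A locally decodable code with `K` source symbols of entropy `Lw`, `M` coded symbols of
entropy `Lx`, and locality `N`. -/
structure LDC (K N M : ℕ) (Lw Lx : ℝ) where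
  P : FinProbSpace
  V : Type
  [fV : Fintype V]
  [dV : DecidableEq V]
  V' : Type
  [fV' : Fintype V']
  [dV' : DecidableEq V']
  /-- the source symbols -/
  W : Fin K → P.Ω → V
  /-- the coded symbols -/
  X : Fin M → P.Ω → V'
  indep : P.iIndep W
  HW : ∀ k, P.H (W k) = Lw
  coded_fn : ∀ m, ∃ f : (Fin K → V) → V', ∀ ω, X m ω = f (fun k => W k ω)
  HX : ∀ m, P.H (X m) = Lx
  /-- the decoding supersets -/
  decSets : Fin K → Finset (Finset (Fin M))
  decSets_nonempty : ∀ k, (decSets k).Nonempty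
  decSets_card : ∀ k, ∀ s ∈ decSets k, s.card = N
  decodes : ∀ k, ∀ s ∈ decSets k,
    P.condH (W k) (P.tuple fun i : {x // x ∈ s} => X i.1) = 0

attribute [instance] LDC.fV LDC.dV LDC.fV' LDC.dV'

/-- A universal LDC: every coded symbol appears in some decoding set of every source symbol. -/
def LDC.IsUniversal {K N M : ℕ} {Lw Lx : ℝ} (C : LDC K N M Lw Lx) : Prop :=
  ∀ (m : Fin M) (k : Fin K), ∃ s ∈ C.decSets k, m ∈ s

/-- A perfectly smooth LDC: for each source symbol, every coded symbol lies in the same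
number of decoding sets. -/
def LDC.IsSmooth {K N M : ℕ} {Lw Lx : ℝ} (C : LDC K N M Lw Lx) : Prop :=
  ∀ (k : Fin K) (m m' : Fin M),
    ((C.decSets k).filter (fun s => m ∈ s)).card =
      ((C.decSets k).filter (fun s => m' ∈ s)).card

/-- `C*(N, K) = N (1 + 1/N + ⋯ + 1/N^{K-1})⁻¹`. -/
def Cstar (N K : ℕ) : ℝ := N / (∑ j ∈ Finset.range K, (1 / (N : ℝ)) ^ j)

/-- An `N`-query information retrieval scheme with `K` messages of entropy `Lw` and
answer sets of sizes `Mn n` with answers of entropy `Lx`. -/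
structure IRScheme (K N : ℕ) (Mn : Fin N → ℕ) (Lw Lx : ℝ) where
  P : FinProbSpace
  V : Type
  [fV : Fintype V]
  [dV : DecidableEq V]
  V' : Type
  [fV' : Fintype V']
  [dV' : DecidableEq V']
  /-- the messages -/
  W : Fin K → P.Ω → V
  /-- `A n m` is the `m`-th possible answer of database `n` -/
  A : (n : Fin N) → Fin (Mn n) → P.Ω → V'
  indep : P.iIndep W
  HW : ∀ k, P.H (W k) = Lw
  ans_fn : ∀ n m, ∃ f : (Fin K → V) → V', ∀ ω, A n m ω = f (fun k => W k ω)
  HA : ∀ n m, P.H (A n m) = Lx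
  /-- the decoding supersets: each decoding set consists of one answer index per database -/
  Q : Fin K → Finset ((n : Fin N) → Fin (Mn n))
  Q_nonempty : ∀ k, (Q k).Nonempty
  decodes : ∀ k, ∀ q ∈ Q k, P.condH (W k) (P.tuple fun n => A n (q n)) = 0

attribute [instance] IRScheme.fV IRScheme.dV IRScheme.fV' IRScheme.dV'

/-- A repudiative (RIR_max) scheme: every possible answer of every database appears in some
decoding set of every message. -/
def IRScheme.IsRIR {K N : ℕ} {Mn : Fin N → ℕ} {Lw Lx : ℝ} (C : IRScheme K N Mn Lw Lx) : Prop :=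
  ∀ (n : Fin N) (m : Fin (Mn n)) (k : Fin K), ∃ q ∈ C.Q k, q n = m

/-- A perfectly private (PIR_max) scheme: for each message there is a distribution on its
decoding sets such that the marginal distribution of the query to each database does not
depend on the message. -/
def IRScheme.IsPIR {K N : ℕ} {Mn : Fin N → ℕ} {Lw Lx : ℝ} (C : IRScheme K N Mn Lw Lx) : Prop :=
  ∃ μ : Fin K → ((n : Fin N) → Fin (Mn n)) → ℝ,
    (∀ k q, 0 ≤ μ k q) ∧ (∀ k, ∑ q ∈ C.Q k, μ k q = 1) ∧
    (∀ (k k' : Fin K) (n : Fin N) (m : Fin (Mn n)),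
      ∑ q ∈ (C.Q k).filter (fun q => q n = m), μ k q =
        ∑ q ∈ (C.Q k').filter (fun q => q n = m), μ k' q)

/-- `C_K(N) = (1 + 1/N + ⋯ + 1/N^{K-1})⁻¹`, the capacity of PIR. -/
def CK (N K : ℕ) : ℝ := (∑ j ∈ Finset.range K, (1 / (N : ℝ)) ^ j)⁻¹

/-! ### Auxiliary entropy toolkit -/

namespace FinProbSpace

variable (P : FinProbSpace)
variable {α β γ : Type} [Fintype α] [DecidableEq α] [Fintype β] [DecidableEq β]
  [Fintype γ] [DecidableEq γ]

lemma prob_nonneg (X : P.Ω → α) (a : α) : 0 ≤ P.prob X a :=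
  Finset.sum_nonneg fun ω _ => by
    by_cases h : X ω = a
    · rw [if_pos h]; exact P.nonneg ω
    · rw [if_neg h]

lemma sum_prob (X : P.Ω → α) : ∑ a, P.prob X a = 1 := by
  rw [← P.sum_one]
  unfold prob
  rw [Finset.sum_comm]
  exact Finset.sum_congr rfl fun ω _ => by simp

lemma prob_le_one (X : P.Ω → α) (a : α) : P.prob X a ≤ 1 :=
  (Finset.single_le_sum (fun b _ => P.prob_nonneg X b) (Finset.mem_univ a)).trans_eq
    (P.sum_prob X)

lemma prob_le_prob (X : P.Ω → α) (Y : P.Ω → β) (a : α) (b : β)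
    (h : ∀ ω, X ω = a → Y ω = b) : P.prob X a ≤ P.prob Y b := by
  refine Finset.sum_le_sum fun ω _ => ?_
  by_cases hx : X ω = a
  · rw [if_pos hx, if_pos (h ω hx)]
  · rw [if_neg hx]
    by_cases hy : Y ω = b
    · rw [if_pos hy]; exact P.nonneg ω
    · rw [if_neg hy]

end FinProbSpace

/-- negative `t log₂ t`, the summand of Shannon entropy. -/
noncomputable def nml (t : ℝ) : ℝ := -(t * Real.logb 2 t)

lemma nml_zero : nml 0 = 0 := by simp [nml]

lemma nml_one : nml 1 = 0 := by simp [nml]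

lemma nml_nonneg {t : ℝ} (h0 : 0 ≤ t) (h1 : t ≤ 1) : 0 ≤ nml t := by
  have h := Real.logb_nonpos (b := 2) (by norm_num) h0 h1
  have := mul_nonneg h0 (neg_nonneg.mpr h)
  simp only [nml]
  nlinarith

lemma nml_mul (x y : ℝ) : nml (x * y) = y * nml x + x * nml y := by
  rcases eq_or_ne x 0 with rfl | hx
  · simp [nml]
  rcases eq_or_ne y 0 with rfl | hy
  · simp [nml]
  unfold nml
  rw [Real.logb_mul hx hy]
  ring

namespace FinProbSpace

variable (P : FinProbSpace)
variable {α β γ : Type} [Fintype α] [DecidableEq α] [Fintype β] [DecidableEq β]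
  [Fintype γ] [DecidableEq γ]

lemma H_eq (X : P.Ω → α) : P.H X = ∑ a, nml (P.prob X a) := rfl

lemma H_nonneg (X : P.Ω → α) : 0 ≤ P.H X :=
  Finset.sum_nonneg fun a _ => nml_nonneg (P.prob_nonneg X a) (P.prob_le_one X a)

lemma H_congr {X Y : P.Ω → α} (h : ∀ ω, X ω = Y ω) : P.H X = P.H Y := by
  have : X = Y := funext h
  rw [this]

lemma prob_comp_fiber (f : α → β) (X : P.Ω → α) (b : β) :
    P.prob (fun ω => f (X ω)) b = ∑ a ∈ Finset.univ.filter (fun a => f a = b), P.prob X a := by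
  rw [Finset.sum_filter]
  calc P.prob (fun ω => f (X ω)) b
      = ∑ ω, ∑ a, (if f a = b then (if X ω = a then P.p ω else 0) else 0) := by
        refine Finset.sum_congr rfl fun ω _ => Eq.symm ?_
        rw [Finset.sum_eq_single (X ω)
          (fun a _ ha => by rw [if_neg (Ne.symm ha), ite_self]) (by simp)]
        simp
    _ = ∑ a, ∑ ω, (if f a = b then (if X ω = a then P.p ω else 0) else 0) :=
        Finset.sum_comm
    _ = ∑ a, (if f a = b then P.prob X a else 0) := by
        refine Finset.sum_congr rfl fun a _ => ?_
        by_cases h : f a = b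
        · simp only [if_pos h]; rfl
        · simp [h]

lemma prob_comp_apply_inj (f : α → β) (hf : Function.Injective f) (X : P.Ω → α) (a : α) :
    P.prob (fun ω => f (X ω)) (f a) = P.prob X a := by
  refine Finset.sum_congr rfl fun ω _ => ?_
  simp [hf.eq_iff]

lemma H_comp_inj (f : α → β) (hf : Function.Injective f) (X : P.Ω → α) :
    P.H (fun ω => f (X ω)) = P.H X := by
  rw [H_eq, H_eq]
  rw [← Finset.sum_subset (Finset.subset_univ (Finset.univ.image f))
    (fun b _ hb => ?_)]
  · rw [Finset.sum_image (fun a _ a' _ h => hf h)]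
    exact Finset.sum_congr rfl fun a _ => by rw [P.prob_comp_apply_inj f hf X a]
  · have : P.prob (fun ω => f (X ω)) b = 0 := by
      refine Finset.sum_eq_zero fun ω _ => ?_
      rw [if_neg]
      intro h
      exact hb (Finset.mem_image.2 ⟨X ω, Finset.mem_univ _, h⟩)
    rw [this, nml_zero]

lemma H_comp_le (f : α → β) (X : P.Ω → α) : P.H (fun ω => f (X ω)) ≤ P.H X := by
  set q := P.prob (fun ω => f (X ω)) with hq
  have key : ∀ a, -(P.prob X a * Real.logb 2 (q (f a))) ≤ nml (P.prob X a) := by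
    intro a
    rcases (P.prob_nonneg X a).eq_or_lt with h | h
    · rw [← h]; simp [nml]
    · have hle : P.prob X a ≤ q (f a) :=
        P.prob_le_prob X (fun ω => f (X ω)) a (f a)
          (fun ω hω => by show f (X ω) = f a; rw [hω])
      have : Real.logb 2 (P.prob X a) ≤ Real.logb 2 (q (f a)) :=
        Real.logb_le_logb_of_le (by norm_num) h hle
      unfold nml
      nlinarith
  calc P.H (fun ω => f (X ω)) = ∑ b, nml (q b) := H_eq ..
    _ = ∑ b, ∑ a ∈ Finset.univ.filter (fun a => f a = b),
          -(P.prob X a * Real.logb 2 (q b)) := by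
        refine Finset.sum_congr rfl fun b _ => ?_
        rw [Finset.sum_neg_distrib, ← Finset.sum_mul, ← P.prob_comp_fiber f X b, ← hq]
        rfl
    _ = ∑ a, -(P.prob X a * Real.logb 2 (q (f a))) := by
        rw [← Finset.sum_fiberwise Finset.univ f
          (fun a => -(P.prob X a * Real.logb 2 (q (f a))))]
        refine Finset.sum_congr rfl fun b _ => Finset.sum_congr rfl fun a ha => ?_
        rw [(Finset.mem_filter.1 ha).2]
    _ ≤ ∑ a, nml (P.prob X a) := Finset.sum_le_sum fun a _ => key a
    _ = P.H X := (H_eq ..).symm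

lemma gibbs {ι : Type} [Fintype ι] (p q : ι → ℝ) (hp : ∀ i, 0 ≤ p i)
    (hq : ∀ i, 0 ≤ q i) (himp : ∀ i, p i ≠ 0 → q i ≠ 0)
    (hsum : ∑ i, q i ≤ ∑ i, p i) :
    ∑ i, nml (p i) ≤ ∑ i, -(p i * Real.logb 2 (q i)) := by
  have h2 : (0:ℝ) < Real.log 2 := Real.log_pos (by norm_num)
  have key : ∀ i, p i * Real.logb 2 (q i) - p i * Real.logb 2 (p i) ≤
      (q i - p i) / Real.log 2 := by
    intro i
    rcases eq_or_ne (p i) 0 with h | h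
    · rw [h]
      simp only [zero_mul, sub_zero, sub_self]
      exact div_nonneg (hq i) h2.le
    · have hpi : 0 < p i := lt_of_le_of_ne (hp i) (Ne.symm h)
      have hqi : 0 < q i := lt_of_le_of_ne (hq i) (Ne.symm (himp i h))
      have hlog : Real.logb 2 (q i) - Real.logb 2 (p i) =
          Real.log (q i / p i) / Real.log 2 := by
        rw [Real.log_div hqi.ne' hpi.ne']
        unfold Real.logb
        ring
      have hls : Real.log (q i / p i) ≤ q i / p i - 1 :=
        Real.log_le_sub_one_of_pos (div_pos hqi hpi)
      have step : p i * Real.log (q i / p i) ≤ q i - p i := by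
        calc p i * Real.log (q i / p i) ≤ p i * (q i / p i - 1) :=
              mul_le_mul_of_nonneg_left hls hpi.le
          _ = q i - p i := by field_simp
      have hinv : (0:ℝ) ≤ (Real.log 2)⁻¹ := inv_nonneg.mpr h2.le
      calc p i * Real.logb 2 (q i) - p i * Real.logb 2 (p i)
          = p i * Real.log (q i / p i) / Real.log 2 := by
            rw [mul_div_assoc, ← hlog]; ring
        _ ≤ (q i - p i) / Real.log 2 := by
            rw [div_eq_mul_inv, div_eq_mul_inv]
            exact mul_le_mul_of_nonneg_right step hinv
  have hsum2 := Finset.sum_le_sum fun i (_ : i ∈ Finset.univ) => key i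
  rw [Finset.sum_sub_distrib] at hsum2
  have h3 : ∑ i, (q i - p i) / Real.log 2 = ((∑ i, q i) - ∑ i, p i) / Real.log 2 := by
    rw [← Finset.sum_div, Finset.sum_sub_distrib]
  have h4 : ((∑ i, q i) - ∑ i, p i) / Real.log 2 ≤ 0 :=
    div_nonpos_of_nonpos_of_nonneg (by linarith) h2.le
  rw [h3] at hsum2
  simp only [nml, Finset.sum_neg_distrib]
  linarith

lemma sum3_mid (U : P.Ω → α) (V : P.Ω → β) (A : P.Ω → γ) (u : α) (a : γ) :
    ∑ v, P.prob (fun ω => (U ω, V ω, A ω)) (u, v, a) =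
      P.prob (fun ω => (U ω, A ω)) (u, a) := by
  unfold prob
  rw [Finset.sum_comm]
  refine Finset.sum_congr rfl fun ω _ => ?_
  by_cases hu : U ω = u
  · by_cases ha : A ω = a
    · simp [hu, ha]
    · simp [hu, ha]
  · simp [hu]

lemma sum3_left (U : P.Ω → α) (V : P.Ω → β) (A : P.Ω → γ) (v : β) (a : γ) :
    ∑ u, P.prob (fun ω => (U ω, V ω, A ω)) (u, v, a) =
      P.prob (fun ω => (V ω, A ω)) (v, a) := by
  unfold prob
  rw [Finset.sum_comm]
  refine Finset.sum_congr rfl fun ω _ => ?_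
  by_cases hv : V ω = v
  · by_cases ha : A ω = a
    · simp [hv, ha]
    · simp [hv, ha]
  · simp [hv]

lemma sum2_left (U : P.Ω → α) (A : P.Ω → γ) (a : γ) :
    ∑ u, P.prob (fun ω => (U ω, A ω)) (u, a) = P.prob A a := by
  unfold prob
  rw [Finset.sum_comm]
  refine Finset.sum_congr rfl fun ω _ => ?_
  by_cases ha : A ω = a
  · simp [ha]
  · simp [ha]

lemma H_submod (U : P.Ω → α) (V : P.Ω → β) (A : P.Ω → γ) :
    P.H (fun ω => (U ω, V ω, A ω)) + P.H A ≤
      P.H (fun ω => (U ω, A ω)) + P.H (fun ω => (V ω, A ω)) := by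
  have rnn : ∀ x : α × β × γ, 0 ≤ P.prob (fun ω => (U ω, V ω, A ω)) x :=
    P.prob_nonneg _
  have rann : ∀ x : α × γ, 0 ≤ P.prob (fun ω => (U ω, A ω)) x := P.prob_nonneg _
  have rbnn : ∀ x : β × γ, 0 ≤ P.prob (fun ω => (V ω, A ω)) x := P.prob_nonneg _
  have rcnn : ∀ a : γ, 0 ≤ P.prob A a := P.prob_nonneg _
  have monoA : ∀ u v a, P.prob (fun ω => (U ω, V ω, A ω)) (u, v, a) ≤
      P.prob (fun ω => (U ω, A ω)) (u, a) := fun u v a =>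
    P.prob_le_prob _ _ _ _ (by
      intro ω h
      simp only [Prod.mk.injEq] at h ⊢
      exact ⟨h.1, h.2.2⟩)
  have monoB : ∀ u v a, P.prob (fun ω => (U ω, V ω, A ω)) (u, v, a) ≤
      P.prob (fun ω => (V ω, A ω)) (v, a) := fun u v a =>
    P.prob_le_prob _ _ _ _ (by
      intro ω h
      simp only [Prod.mk.injEq] at h ⊢
      exact ⟨h.2.1, h.2.2⟩)
  have monoC : ∀ u a, P.prob (fun ω => (U ω, A ω)) (u, a) ≤ P.prob A a := fun u a =>
    P.prob_le_prob _ _ _ _ (by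
      intro ω h
      simp only [Prod.mk.injEq] at h
      exact h.2)
  set q : α × β × γ → ℝ := fun x =>
    P.prob (fun ω => (U ω, A ω)) (x.1, x.2.2) *
      P.prob (fun ω => (V ω, A ω)) (x.2.1, x.2.2) / P.prob A x.2.2 with hqdef
  have hinner : ∀ a : γ, ∑ u, ∑ v, q (u, v, a) ≤ P.prob A a := by
    intro a
    rcases (rcnn a).eq_or_lt with h0 | h0
    · have hra0 : ∀ u, P.prob (fun ω => (U ω, A ω)) (u, a) = 0 := fun u =>
        le_antisymm (h0 ▸ monoC u a) (rann _)
      simp only [hqdef]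
      simp only [hra0, zero_mul, zero_div, Finset.sum_const_zero]
      exact rcnn a
    · have hper : ∀ u, ∑ v, q (u, v, a) = P.prob (fun ω => (U ω, A ω)) (u, a) := by
        intro u
        simp only [hqdef]
        rw [← Finset.sum_div, ← Finset.mul_sum, P.sum2_left V A a, mul_div_assoc,
          div_self h0.ne', mul_one]
      rw [Finset.sum_congr rfl fun u _ => hper u, P.sum2_left U A a]
  have hsum : ∑ x : α × β × γ, q x ≤ ∑ x : α × β × γ,
      P.prob (fun ω => (U ω, V ω, A ω)) x := by
    rw [P.sum_prob (fun ω => (U ω, V ω, A ω))]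
    rw [Fintype.sum_prod_type]
    have swap1 : ∀ u : α, ∑ w : β × γ, q (u, w) = ∑ a, ∑ v, q (u, v, a) := by
      intro u
      rw [Fintype.sum_prod_type, Finset.sum_comm]
    calc ∑ u, ∑ w : β × γ, q (u, w) = ∑ u, ∑ a, ∑ v, q (u, v, a) :=
          Finset.sum_congr rfl fun u _ => swap1 u
      _ = ∑ a, ∑ u, ∑ v, q (u, v, a) := Finset.sum_comm
      _ ≤ ∑ a, P.prob A a := Finset.sum_le_sum fun a _ => hinner a
      _ = 1 := P.sum_prob A
  have hgibbs := gibbs (P.prob (fun ω => (U ω, V ω, A ω))) q rnn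
    (fun x => div_nonneg (mul_nonneg (rann _) (rbnn _)) (rcnn _))
    (fun x hx => by
      obtain ⟨u, v, a⟩ := x
      have hr : 0 < P.prob (fun ω => (U ω, V ω, A ω)) (u, v, a) :=
        lt_of_le_of_ne (rnn _) (Ne.symm hx)
      have h1 : 0 < P.prob (fun ω => (U ω, A ω)) (u, a) := hr.trans_le (monoA u v a)
      have h2 : 0 < P.prob (fun ω => (V ω, A ω)) (v, a) := hr.trans_le (monoB u v a)
      have h3 : 0 < P.prob A a := h1.trans_le (monoC u a)
      have : 0 < q (u, v, a) := div_pos (mul_pos h1 h2) h3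
      exact this.ne')
    hsum
  have hsplit : ∀ x : α × β × γ,
      -(P.prob (fun ω => (U ω, V ω, A ω)) x * Real.logb 2 (q x)) =
      -(P.prob (fun ω => (U ω, V ω, A ω)) x *
          Real.logb 2 (P.prob (fun ω => (U ω, A ω)) (x.1, x.2.2))) +
      -(P.prob (fun ω => (U ω, V ω, A ω)) x *
          Real.logb 2 (P.prob (fun ω => (V ω, A ω)) (x.2.1, x.2.2))) +
      (P.prob (fun ω => (U ω, V ω, A ω)) x * Real.logb 2 (P.prob A x.2.2)) := by
    intro x
    obtain ⟨u, v, a⟩ := x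
    rcases eq_or_ne (P.prob (fun ω => (U ω, V ω, A ω)) (u, v, a)) 0 with h | h
    · rw [h]; ring
    · have hr : 0 < P.prob (fun ω => (U ω, V ω, A ω)) (u, v, a) :=
        lt_of_le_of_ne (rnn _) (Ne.symm h)
      have h1 : P.prob (fun ω => (U ω, A ω)) (u, a) ≠ 0 :=
        (hr.trans_le (monoA u v a)).ne'
      have h2 : P.prob (fun ω => (V ω, A ω)) (v, a) ≠ 0 :=
        (hr.trans_le (monoB u v a)).ne'
      have h3 : P.prob A a ≠ 0 :=
        ((hr.trans_le (monoA u v a)).trans_le (monoC u a)).ne'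
      have : q (u, v, a) = P.prob (fun ω => (U ω, A ω)) (u, a) *
          P.prob (fun ω => (V ω, A ω)) (v, a) / P.prob A a := rfl
      rw [this, Real.logb_div (mul_ne_zero h1 h2) h3, Real.logb_mul h1 h2]
      ring
  have hS1 : ∑ x : α × β × γ, -(P.prob (fun ω => (U ω, V ω, A ω)) x *
      Real.logb 2 (P.prob (fun ω => (U ω, A ω)) (x.1, x.2.2))) =
      P.H (fun ω => (U ω, A ω)) := by
    rw [Fintype.sum_prod_type]
    have swap1 : ∀ u : α, ∑ w : β × γ, -(P.prob (fun ω => (U ω, V ω, A ω)) (u, w) *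
        Real.logb 2 (P.prob (fun ω => (U ω, A ω)) (u, w.2))) =
        ∑ a, ∑ v, -(P.prob (fun ω => (U ω, V ω, A ω)) (u, v, a) *
          Real.logb 2 (P.prob (fun ω => (U ω, A ω)) (u, a))) := by
      intro u
      rw [Fintype.sum_prod_type, Finset.sum_comm]
    calc ∑ u, ∑ w : β × γ, -(P.prob (fun ω => (U ω, V ω, A ω)) (u, w) *
          Real.logb 2 (P.prob (fun ω => (U ω, A ω)) (u, w.2)))
        = ∑ u, ∑ a, ∑ v, -(P.prob (fun ω => (U ω, V ω, A ω)) (u, v, a) *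
            Real.logb 2 (P.prob (fun ω => (U ω, A ω)) (u, a))) :=
          Finset.sum_congr rfl fun u _ => swap1 u
      _ = ∑ u, ∑ a, nml (P.prob (fun ω => (U ω, A ω)) (u, a)) := by
          refine Finset.sum_congr rfl fun u _ => Finset.sum_congr rfl fun a _ => ?_
          rw [Finset.sum_neg_distrib, ← Finset.sum_mul, P.sum3_mid U V A u a]
          rfl
      _ = P.H (fun ω => (U ω, A ω)) := by
          rw [H_eq, Fintype.sum_prod_type]
  have hS2 : ∑ x : α × β × γ, -(P.prob (fun ω => (U ω, V ω, A ω)) x *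
      Real.logb 2 (P.prob (fun ω => (V ω, A ω)) (x.2.1, x.2.2))) =
      P.H (fun ω => (V ω, A ω)) := by
    rw [Fintype.sum_prod_type, Finset.sum_comm]
    calc ∑ w : β × γ, ∑ u, -(P.prob (fun ω => (U ω, V ω, A ω)) (u, w) *
          Real.logb 2 (P.prob (fun ω => (V ω, A ω)) (w.1, w.2)))
        = ∑ w : β × γ, nml (P.prob (fun ω => (V ω, A ω)) w) := by
          refine Finset.sum_congr rfl fun w _ => ?_
          rw [Finset.sum_neg_distrib, ← Finset.sum_mul, P.sum3_left U V A w.1 w.2]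
          rfl
      _ = P.H (fun ω => (V ω, A ω)) := (H_eq ..).symm
  have hS3 : ∑ x : α × β × γ, (P.prob (fun ω => (U ω, V ω, A ω)) x *
      Real.logb 2 (P.prob A x.2.2)) = -(P.H A) := by
    rw [Fintype.sum_prod_type, Finset.sum_comm]
    calc ∑ w : β × γ, ∑ u, (P.prob (fun ω => (U ω, V ω, A ω)) (u, w) *
          Real.logb 2 (P.prob A w.2))
        = ∑ w : β × γ, P.prob (fun ω => (V ω, A ω)) w * Real.logb 2 (P.prob A w.2) := by
          refine Finset.sum_congr rfl fun w _ => ?_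
          rw [← Finset.sum_mul, P.sum3_left U V A w.1 w.2]
      _ = ∑ a, ∑ v, P.prob (fun ω => (V ω, A ω)) (v, a) * Real.logb 2 (P.prob A a) :=
          by rw [Fintype.sum_prod_type, Finset.sum_comm]
      _ = ∑ a, P.prob A a * Real.logb 2 (P.prob A a) := by
          refine Finset.sum_congr rfl fun a _ => ?_
          rw [← Finset.sum_mul, P.sum2_left V A a]
      _ = -(P.H A) := by
          rw [H_eq, ← Finset.sum_neg_distrib]
          exact Finset.sum_congr rfl fun a _ => by simp [nml]
  have hfinal : P.H (fun ω => (U ω, V ω, A ω)) ≤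
      P.H (fun ω => (U ω, A ω)) + P.H (fun ω => (V ω, A ω)) - P.H A := by
    calc P.H (fun ω => (U ω, V ω, A ω))
        = ∑ x : α × β × γ, nml (P.prob (fun ω => (U ω, V ω, A ω)) x) := H_eq ..
      _ ≤ ∑ x : α × β × γ, -(P.prob (fun ω => (U ω, V ω, A ω)) x *
            Real.logb 2 (q x)) := hgibbs
      _ = ∑ x : α × β × γ, (-(P.prob (fun ω => (U ω, V ω, A ω)) x *
            Real.logb 2 (P.prob (fun ω => (U ω, A ω)) (x.1, x.2.2))) +
          -(P.prob (fun ω => (U ω, V ω, A ω)) x *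
            Real.logb 2 (P.prob (fun ω => (V ω, A ω)) (x.2.1, x.2.2))) +
          (P.prob (fun ω => (U ω, V ω, A ω)) x * Real.logb 2 (P.prob A x.2.2))) :=
          Finset.sum_congr rfl fun x _ => hsplit x
      _ = P.H (fun ω => (U ω, A ω)) + P.H (fun ω => (V ω, A ω)) - P.H A := by
          rw [Finset.sum_add_distrib, Finset.sum_add_distrib, hS1, hS2, hS3]
          ring
  linarith

lemma condH_nonneg (X : P.Ω → α) (Y : P.Ω → β) : 0 ≤ P.condH X Y := by
  have h : P.H Y ≤ P.H (fun ω => (X ω, Y ω)) :=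
    P.H_comp_le (fun p : α × β => p.2) (fun ω => (X ω, Y ω))
  unfold condH
  linarith

lemma H_unique [Unique α] (X : P.Ω → α) : P.H X = 0 := by
  have hp : P.prob X default = 1 := by
    rw [← P.sum_one]
    exact Finset.sum_congr rfl fun ω _ => if_pos (Unique.eq_default _)
  rw [H_eq, Finset.univ_unique, Finset.sum_singleton, hp, nml_one]

lemma condH_pair_le (U : P.Ω → α) (V : P.Ω → β) (A : P.Ω → γ) :
    P.condH (fun ω => (U ω, V ω)) A ≤ P.condH U A + P.condH V A := by
  have hsub := P.H_submod U V A
  have hinj : Function.Injective (fun x : (α × β) × γ => (x.1.1, x.1.2, x.2)) := by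
    intro x y h
    simp only [Prod.mk.injEq] at h
    exact Prod.ext_iff.mpr ⟨Prod.ext_iff.mpr ⟨h.1, h.2.1⟩, h.2.2⟩
  have hre : P.H (fun ω => (U ω, V ω, A ω)) = P.H (fun ω => ((U ω, V ω), A ω)) :=
    P.H_comp_inj _ hinj (fun ω => ((U ω, V ω), A ω))
  unfold condH
  linarith

lemma condH_cond_pair_le (U : P.Ω → α) (B : P.Ω → β) (C : P.Ω → γ) :
    P.condH U (fun ω => (B ω, C ω)) ≤ P.condH U B := by
  have hsub := P.H_submod U C B
  have hinj1 : Function.Injective (fun x : α × β × γ => (x.1, x.2.2, x.2.1)) := by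
    intro x y h
    simp only [Prod.mk.injEq] at h
    exact Prod.ext_iff.mpr ⟨h.1, Prod.ext_iff.mpr ⟨h.2.2, h.2.1⟩⟩
  have e1 : P.H (fun ω => (U ω, C ω, B ω)) = P.H (fun ω => (U ω, B ω, C ω)) :=
    P.H_comp_inj _ hinj1 (fun ω => (U ω, B ω, C ω))
  have e2 : P.H (fun ω => (C ω, B ω)) = P.H (fun ω => (B ω, C ω)) :=
    P.H_comp_inj Prod.swap Prod.swap_injective (fun ω => (B ω, C ω))
  unfold condH
  linarith

/-- `H((X, Y, Z)) = H((Z, X, Y))`. -/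
lemma H_rot (X : P.Ω → α) (Y : P.Ω → β) (Z : P.Ω → γ) :
    P.H (fun ω => (X ω, Y ω, Z ω)) = P.H (fun ω => (Z ω, X ω, Y ω)) := by
  have hinj : Function.Injective (fun x : α × β × γ => (x.2.2, x.1, x.2.1)) := by
    intro x y h
    simp only [Prod.mk.injEq] at h
    exact Prod.ext_iff.mpr ⟨h.2.1, Prod.ext_iff.mpr ⟨h.2.2, h.1⟩⟩
  exact (P.H_comp_inj _ hinj (fun ω => (X ω, Y ω, Z ω))).symm

lemma H_pair_of_indep (X : P.Ω → α) (Y : P.Ω → β)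
    (h : ∀ a b, P.prob (fun ω => (X ω, Y ω)) (a, b) = P.prob X a * P.prob Y b) :
    P.H (fun ω => (X ω, Y ω)) = P.H X + P.H Y := by
  rw [H_eq, H_eq, H_eq, Fintype.sum_prod_type]
  calc ∑ a, ∑ b, nml (P.prob (fun ω => (X ω, Y ω)) (a, b))
      = ∑ a, (nml (P.prob X a) + P.prob X a * ∑ b, nml (P.prob Y b)) := by
        refine Finset.sum_congr rfl fun a _ => ?_
        rw [Finset.sum_congr rfl fun b (_ : b ∈ Finset.univ) => by
          rw [h a b, nml_mul]]
        rw [Finset.sum_add_distrib, ← Finset.sum_mul, P.sum_prob Y, one_mul,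
          ← Finset.mul_sum]
    _ = (∑ a, nml (P.prob X a)) + (∑ a, P.prob X a * ∑ b, nml (P.prob Y b)) :=
        Finset.sum_add_distrib
    _ = (∑ a, nml (P.prob X a)) + ∑ b, nml (P.prob Y b) := by
        rw [← Finset.sum_mul, P.sum_prob X, one_mul]

lemma condH_tuple_le_sum {ι : Type} [Fintype ι] [DecidableEq ι]
    (Z : ι → P.Ω → α) (A : P.Ω → γ) (t : Finset ι) :
    P.condH (P.tuple fun i : {x // x ∈ t} => Z i.1) A ≤ ∑ m ∈ t, P.condH (Z m) A := by
  induction t using Finset.induction_on with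
  | empty =>
    have e : {x // x ∈ (∅ : Finset ι)} → α := fun i => absurd i.2 (Finset.notMem_empty i.1)
    have hrel : P.H (fun ω => ((fun c : γ => (e, c)) (A ω))) = P.H A :=
      P.H_comp_inj (fun c : γ => (e, c)) (fun c d h => congrArg Prod.snd h) A
    have hcg : P.H (fun ω => ((P.tuple fun i : {x // x ∈ (∅ : Finset ι)} => Z i.1) ω, A ω))
        = P.H (fun ω => ((fun c : γ => (e, c)) (A ω))) := by
      refine P.H_congr fun ω => ?_
      refine Prod.ext_iff.mpr ⟨?_, rfl⟩
      funext i
      exact absurd i.2 (Finset.notMem_empty i.1)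
    unfold condH
    rw [hcg, hrel, Finset.sum_empty, sub_self]
  | insert a s ha IH =>
    have hf : Function.Injective (fun y : ({x // x ∈ insert a s} → α) × γ =>
        ((y.1 ⟨a, Finset.mem_insert_self a s⟩,
          fun i : {x // x ∈ s} => y.1 ⟨i.1, Finset.mem_insert_of_mem i.2⟩), y.2)) := by
      intro y z h
      simp only [Prod.mk.injEq] at h
      obtain ⟨⟨h1, h2⟩, h3⟩ := h
      refine Prod.ext_iff.mpr ⟨?_, h3⟩
      funext i
      rcases Finset.mem_insert.1 i.2 with he | hs
      · have hi : i = ⟨a, Finset.mem_insert_self a s⟩ := Subtype.ext he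
        rw [hi]; exact h1
      · exact congrFun h2 ⟨i.1, hs⟩
    have hrel : P.H (fun ω => ((Z a ω, (P.tuple fun i : {x // x ∈ s} => Z i.1) ω), A ω))
        = P.H (fun ω => ((P.tuple fun i : {x // x ∈ insert a s} => Z i.1) ω, A ω)) :=
      P.H_comp_inj _ hf (fun ω => ((P.tuple fun i : {x // x ∈ insert a s} => Z i.1) ω, A ω))
    have step1 : P.condH (P.tuple fun i : {x // x ∈ insert a s} => Z i.1) A =
        P.condH (fun ω => (Z a ω, (P.tuple fun i : {x // x ∈ s} => Z i.1) ω)) A := by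
      unfold condH
      rw [hrel]
    rw [step1, Finset.sum_insert ha]
    calc P.condH (fun ω => (Z a ω, (P.tuple fun i : {x // x ∈ s} => Z i.1) ω)) A
        ≤ P.condH (Z a) A + P.condH (P.tuple fun i : {x // x ∈ s} => Z i.1) A :=
          P.condH_pair_le _ _ _
      _ ≤ P.condH (Z a) A + ∑ m ∈ s, P.condH (Z m) A := by linarith
  -- done

/-- split off the last coordinate of a `Fin (n+1)`-tuple. -/
lemma H_snoc {n : ℕ} {V : Type} [Fintype V] [DecidableEq V] (B : P.Ω → (Fin (n + 1) → V)) :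
    P.H (fun ω => (fun i : Fin n => B ω i.castSucc, B ω (Fin.last n))) = P.H B := by
  have hf : Function.Injective (fun b : Fin (n + 1) → V =>
      ((fun i : Fin n => b i.castSucc), b (Fin.last n))) := by
    intro b c h
    simp only [Prod.mk.injEq] at h
    funext i
    induction i using Fin.lastCases with
    | last => exact h.2
    | cast i => exact congrFun h.1 i
  exact P.H_comp_inj _ hf B

end FinProbSpace

/-- The tuple of the first `j` source symbols. -/
noncomputable def Wpre {K N M : ℕ} {Lw Lx : ℝ} (C : LDC K N M Lw Lx) (j : ℕ) (hj : j ≤ K) :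
    C.P.Ω → (Fin j → C.V) := fun ω i => C.W ⟨i.1, lt_of_lt_of_le i.2 hj⟩ ω

set_option maxHeartbeats 2000000 in
lemma prob_Wpre {K N M : ℕ} {Lw Lx : ℝ} (C : LDC K N M Lw Lx) (j : ℕ) (hj : j ≤ K)
    (a : Fin j → C.V) :
    C.P.prob (Wpre C j hj) a =
      ∏ i : Fin K, (if h : (i : ℕ) < j then C.P.prob (C.W i) (a ⟨i.1, h⟩) else 1) := by
  classical
  set φ : (Fin K → C.V) → (Fin j → C.V) :=
    fun b => fun i : Fin j => b ⟨i.1, lt_of_lt_of_le i.2 hj⟩ with hφ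
  have h1 : ∀ (b : Fin K → C.V), (if φ b = a then ∏ i, C.P.prob (C.W i) (b i) else 0) =
      ∏ i : Fin K, (if h : (i : ℕ) < j
        then (if b i = a ⟨i.1, h⟩ then C.P.prob (C.W i) (b i) else 0)
        else C.P.prob (C.W i) (b i)) := by
    intro b
    by_cases hb : φ b = a
    · rw [if_pos hb]
      refine Finset.prod_congr rfl fun i _ => ?_
      by_cases h : (i : ℕ) < j
      · rw [dif_pos h, if_pos]
        exact congrFun hb ⟨i.1, h⟩
      · rw [dif_neg h]
    · rw [if_neg hb]
      obtain ⟨i₀, hne⟩ := Function.ne_iff.1 hb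
      refine (Finset.prod_eq_zero (Finset.mem_univ
        (⟨i₀.1, lt_of_lt_of_le i₀.2 hj⟩ : Fin K)) ?_).symm
      rw [dif_pos i₀.2]
      exact if_neg hne
  calc C.P.prob (Wpre C j hj) a
      = ∑ b ∈ Finset.univ.filter (fun b => φ b = a), C.P.prob (C.P.tuple C.W) b :=
        C.P.prob_comp_fiber φ (C.P.tuple C.W) a
    _ = ∑ b ∈ Finset.univ.filter (fun b => φ b = a), ∏ i, C.P.prob (C.W i) (b i) :=
        Finset.sum_congr rfl fun b _ => C.indep b
    _ = ∑ b : Fin K → C.V, (if φ b = a then ∏ i, C.P.prob (C.W i) (b i) else 0) :=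
        Finset.sum_filter _ _
    _ = ∑ b : Fin K → C.V, ∏ i : Fin K, (if h : (i : ℕ) < j
          then (if b i = a ⟨i.1, h⟩ then C.P.prob (C.W i) (b i) else 0)
          else C.P.prob (C.W i) (b i)) :=
        Finset.sum_congr rfl fun b _ => h1 b
    _ = ∏ i : Fin K, ∑ x : C.V, (if h : (i : ℕ) < j
          then (if x = a ⟨i.1, h⟩ then C.P.prob (C.W i) x else 0)
          else C.P.prob (C.W i) x) :=
        (Fintype.prod_sum (fun (i : Fin K) (x : C.V) => if h : (i : ℕ) < j
          then (if x = a ⟨i.1, h⟩ then C.P.prob (C.W i) x else 0)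
          else C.P.prob (C.W i) x)).symm
    _ = ∏ i : Fin K, (if h : (i : ℕ) < j then C.P.prob (C.W i) (a ⟨i.1, h⟩) else 1) := by
        refine Finset.prod_congr rfl fun i _ => ?_
        by_cases h : (i : ℕ) < j
        · rw [dif_pos h]
          simp only [dif_pos h]
          rw [Finset.sum_ite_eq' Finset.univ (a ⟨i.1, h⟩) (C.P.prob (C.W i))]
          simp
        · rw [dif_neg h]
          simp only [dif_neg h]
          exact C.P.sum_prob (C.W i)

set_option maxHeartbeats 2000000 in
lemma prob_Wpre_pair {K N M : ℕ} {Lw Lx : ℝ} (C : LDC K N M Lw Lx) (j : ℕ) (hj : j + 1 ≤ K)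
    (a : Fin j → C.V) (v : C.V) :
    C.P.prob (fun ω => (Wpre C j (Nat.le_of_succ_le hj) ω, C.W ⟨j, hj⟩ ω)) (a, v) =
      C.P.prob (Wpre C j (Nat.le_of_succ_le hj)) a * C.P.prob (C.W ⟨j, hj⟩) v := by
  classical
  have hj' : j ≤ K := Nat.le_of_succ_le hj
  set ψ : (Fin K → C.V) → (Fin j → C.V) × C.V :=
    fun b => (fun i : Fin j => b ⟨i.1, lt_of_lt_of_le i.2 hj'⟩, b ⟨j, hj⟩) with hψ
  have h2 : ∀ (b : Fin K → C.V),
      (if ψ b = (a, v) then ∏ i, C.P.prob (C.W i) (b i) else 0) =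
      ∏ i : Fin K, (if h : (i : ℕ) < j
        then (if b i = a ⟨i.1, h⟩ then C.P.prob (C.W i) (b i) else 0)
        else (if i = ⟨j, hj⟩ then (if b i = v then C.P.prob (C.W i) (b i) else 0)
          else C.P.prob (C.W i) (b i))) := by
    intro b
    by_cases hb1 : (fun i : Fin j => b ⟨i.1, lt_of_lt_of_le i.2 hj'⟩) = a
    · by_cases hb2 : b ⟨j, hj⟩ = v
      · rw [if_pos (by exact Prod.ext_iff.mpr ⟨hb1, hb2⟩)]
        refine Finset.prod_congr rfl fun i _ => ?_
        by_cases h : (i : ℕ) < j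
        · rw [dif_pos h, if_pos (congrFun hb1 ⟨i.1, h⟩)]
        · rw [dif_neg h]
          by_cases hik : i = ⟨j, hj⟩
          · rw [if_pos hik, if_pos (by rw [hik]; exact hb2)]
          · rw [if_neg hik]
      · rw [if_neg (fun hc => hb2 (congrArg Prod.snd hc))]
        refine (Finset.prod_eq_zero (Finset.mem_univ (⟨j, hj⟩ : Fin K)) ?_).symm
        rw [dif_neg (by simp), if_pos rfl]
        exact if_neg hb2
    · rw [if_neg (fun hc => hb1 (congrArg Prod.fst hc))]
      obtain ⟨i₀, hne⟩ := Function.ne_iff.1 hb1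
      refine (Finset.prod_eq_zero (Finset.mem_univ
        (⟨i₀.1, lt_of_lt_of_le i₀.2 hj'⟩ : Fin K)) ?_).symm
      rw [dif_pos i₀.2]
      exact if_neg hne
  have hsum : ∀ i : Fin K, ∑ x : C.V, (if h : (i : ℕ) < j
        then (if x = a ⟨i.1, h⟩ then C.P.prob (C.W i) x else 0)
        else (if i = ⟨j, hj⟩ then (if x = v then C.P.prob (C.W i) x else 0)
          else C.P.prob (C.W i) x)) =
      (if h : (i : ℕ) < j then C.P.prob (C.W i) (a ⟨i.1, h⟩) else 1) *
        (if i = ⟨j, hj⟩ then C.P.prob (C.W ⟨j, hj⟩) v else 1) := by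
    intro i
    by_cases h : (i : ℕ) < j
    · have hik : i ≠ ⟨j, hj⟩ := fun he => by rw [he] at h; exact absurd h (lt_irrefl j)
      simp only [dif_pos h, if_neg hik, mul_one]
      rw [Finset.sum_ite_eq' Finset.univ (a ⟨i.1, h⟩) (C.P.prob (C.W i))]
      simp
    · simp only [dif_neg h]
      by_cases hik : i = ⟨j, hj⟩
      · simp only [if_pos hik, one_mul]
        rw [Finset.sum_ite_eq' Finset.univ v (C.P.prob (C.W i))]
        rw [hik]
        simp
      · simp only [if_neg hik, mul_one]
        exact C.P.sum_prob (C.W i)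
  calc C.P.prob (fun ω => (Wpre C j hj' ω, C.W ⟨j, hj⟩ ω)) (a, v)
      = ∑ b ∈ Finset.univ.filter (fun b => ψ b = (a, v)), C.P.prob (C.P.tuple C.W) b :=
        C.P.prob_comp_fiber ψ (C.P.tuple C.W) (a, v)
    _ = ∑ b ∈ Finset.univ.filter (fun b => ψ b = (a, v)), ∏ i, C.P.prob (C.W i) (b i) :=
        Finset.sum_congr rfl fun b _ => C.indep b
    _ = ∑ b : Fin K → C.V, (if ψ b = (a, v) then ∏ i, C.P.prob (C.W i) (b i) else 0) :=
        Finset.sum_filter _ _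
    _ = ∑ b : Fin K → C.V, ∏ i : Fin K, (if h : (i : ℕ) < j
          then (if b i = a ⟨i.1, h⟩ then C.P.prob (C.W i) (b i) else 0)
          else (if i = ⟨j, hj⟩ then (if b i = v then C.P.prob (C.W i) (b i) else 0)
            else C.P.prob (C.W i) (b i))) :=
        Finset.sum_congr rfl fun b _ => h2 b
    _ = ∏ i : Fin K, ∑ x : C.V, (if h : (i : ℕ) < j
          then (if x = a ⟨i.1, h⟩ then C.P.prob (C.W i) x else 0)
          else (if i = ⟨j, hj⟩ then (if x = v then C.P.prob (C.W i) x else 0)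
            else C.P.prob (C.W i) x)) :=
        (Fintype.prod_sum (fun (i : Fin K) (x : C.V) => if h : (i : ℕ) < j
          then (if x = a ⟨i.1, h⟩ then C.P.prob (C.W i) x else 0)
          else (if i = ⟨j, hj⟩ then (if x = v then C.P.prob (C.W i) x else 0)
            else C.P.prob (C.W i) x))).symm
    _ = ∏ i : Fin K, ((if h : (i : ℕ) < j then C.P.prob (C.W i) (a ⟨i.1, h⟩) else 1) *
          (if i = ⟨j, hj⟩ then C.P.prob (C.W ⟨j, hj⟩) v else 1)) :=
        Finset.prod_congr rfl fun i _ => hsum i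
    _ = (∏ i : Fin K, (if h : (i : ℕ) < j then C.P.prob (C.W i) (a ⟨i.1, h⟩) else 1)) *
          ∏ i : Fin K, (if i = ⟨j, hj⟩ then C.P.prob (C.W ⟨j, hj⟩) v else 1) :=
        Finset.prod_mul_distrib
    _ = C.P.prob (Wpre C j hj') a * C.P.prob (C.W ⟨j, hj⟩) v := by
        rw [← prob_Wpre C j hj' a]
        congr 1
        rw [Finset.prod_ite_eq' Finset.univ (⟨j, hj⟩ : Fin K)
          (fun _ => C.P.prob (C.W ⟨j, hj⟩) v)]
        simp

/-- Converse bound for universal LDCs: for every ULDC with locality `N`,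
`K` source symbols of entropy `Lw` each and `M` coded symbols of entropy `Lx` each,
`(1 + N + ⋯ + N^{K-1}) Lw ≤ N^K Lx`; equivalently `Lw / Lx ≤ C*(N, K)`. -/
theorem uldc_converse (K N M : ℕ) (hK : 1 ≤ K) (hN : 1 ≤ N) (Lw Lx : ℝ)
    (hLw : 0 < Lw) (hLx : 0 < Lx) (C : LDC K N M Lw Lx) (hU : C.IsUniversal) :
    (∑ j ∈ Finset.range K, (N : ℝ) ^ j) * Lw ≤ (N : ℝ) ^ K * Lx ∧
      Lw / Lx ≤ Cstar N K := by
  classical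
  have main : ∀ (j : ℕ) (hj : j ≤ K) (m : Fin M),
      C.P.condH (C.X m) (Wpre C j hj) ≤
        (N : ℝ) ^ j * Lx - (∑ i ∈ Finset.range j, (N : ℝ) ^ i) * Lw := by
    intro j
    induction j with
    | zero =>
      intro hj m
      have hA0 : C.P.H (Wpre C 0 hj) = 0 := C.P.H_unique _
      have hf : Function.Injective (fun x : C.V' => (x, (default : Fin 0 → C.V))) :=
        fun x y h => congrArg Prod.fst h
      have hpair : C.P.H (fun ω => (C.X m ω, Wpre C 0 hj ω)) = C.P.H (C.X m) := by
        rw [← C.P.H_comp_inj _ hf (C.X m)]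
        exact C.P.H_congr fun ω => Prod.ext_iff.mpr ⟨rfl, Subsingleton.elim _ _⟩
      unfold FinProbSpace.condH
      rw [hpair, hA0, C.HX m]
      simp
    | succ j IH =>
      intro hj m
      have hj' : j ≤ K := Nat.le_of_succ_le hj
      obtain ⟨s, hs, hms⟩ := hU m ⟨j, hj⟩
      have hcard : s.card = N := C.decSets_card _ s hs
      have hdec : C.P.condH (C.W ⟨j, hj⟩)
          (C.P.tuple fun i : {x // x ∈ s} => C.X i.1) = 0 := C.decodes _ s hs
      set Y : C.P.Ω → ({x // x ∈ s} → C.V') :=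
        C.P.tuple fun i : {x // x ∈ s} => C.X i.1 with hY
      set A : C.P.Ω → (Fin j → C.V) := Wpre C j hj' with hA
      set A' : C.P.Ω → (Fin (j + 1) → C.V) := Wpre C (j + 1) hj with hA'
      have c1 : C.P.condH (C.X m) A' ≤ C.P.condH Y A' := by
        have hcomp : C.P.H (fun ω => (C.X m ω, A' ω)) ≤ C.P.H (fun ω => (Y ω, A' ω)) :=
          C.P.H_comp_le (fun p : ({x // x ∈ s} → C.V') × (Fin (j + 1) → C.V) =>
            (p.1 ⟨m, hms⟩, p.2)) (fun ω => (Y ω, A' ω))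
        unfold FinProbSpace.condH
        linarith
      have e1a : C.P.H (fun ω => (A ω, C.W ⟨j, hj⟩ ω)) = C.P.H A' := C.P.H_snoc A'
      have e1b : C.P.H (fun ω => (A ω, C.W ⟨j, hj⟩ ω)) = C.P.H A + Lw := by
        rw [C.P.H_pair_of_indep A (C.W ⟨j, hj⟩)
          (fun a v => prob_Wpre_pair C j hj a v), C.HW]
      have hfY : Function.Injective
          (fun p : ({x // x ∈ s} → C.V') × (Fin (j + 1) → C.V) =>
            (p.1, ((fun i : Fin j => p.2 i.castSucc), p.2 (Fin.last j)))) := by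
        intro y z h
        simp only [Prod.mk.injEq] at h
        refine Prod.ext_iff.mpr ⟨h.1, ?_⟩
        funext i
        induction i using Fin.lastCases with
        | last => exact h.2.2
        | cast i => exact congrFun h.2.1 i
      have e2 : C.P.H (fun ω => (Y ω, A ω, C.W ⟨j, hj⟩ ω)) =
          C.P.H (fun ω => (Y ω, A' ω)) :=
        C.P.H_comp_inj _ hfY (fun ω => (Y ω, A' ω))
      have e3 : C.P.H (fun ω => (Y ω, A ω, C.W ⟨j, hj⟩ ω)) =
          C.P.H (fun ω => (C.W ⟨j, hj⟩ ω, Y ω, A ω)) := C.P.H_rot Y A (C.W ⟨j, hj⟩)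
      have e4 : C.P.condH (C.W ⟨j, hj⟩) (fun ω => (Y ω, A ω)) ≤ 0 :=
        (C.P.condH_cond_pair_le (C.W ⟨j, hj⟩) Y A).trans (le_of_eq hdec)
      have e5 : C.P.H (fun ω => (C.W ⟨j, hj⟩ ω, Y ω, A ω)) ≤
          C.P.H (fun ω => (Y ω, A ω)) := by
        unfold FinProbSpace.condH at e4
        beta_reduce at e4
        linarith
      have c8 : C.P.condH Y A' ≤ C.P.condH Y A - Lw := by
        unfold FinProbSpace.condH
        linarith [e1a, e1b, e2, e3, e5]
      have c9 : C.P.condH Y A ≤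
          (N : ℝ) * ((N : ℝ) ^ j * Lx - (∑ i ∈ Finset.range j, (N : ℝ) ^ i) * Lw) := by
        calc C.P.condH Y A ≤ ∑ m' ∈ s, C.P.condH (C.X m') A :=
              C.P.condH_tuple_le_sum C.X A s
          _ ≤ ∑ _m' ∈ s, ((N : ℝ) ^ j * Lx - (∑ i ∈ Finset.range j, (N : ℝ) ^ i) * Lw) :=
              Finset.sum_le_sum fun m' _ => IH hj' m'
          _ = (s.card : ℝ) *
              ((N : ℝ) ^ j * Lx - (∑ i ∈ Finset.range j, (N : ℝ) ^ i) * Lw) := by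
              rw [Finset.sum_const, nsmul_eq_mul]
          _ = (N : ℝ) *
              ((N : ℝ) ^ j * Lx - (∑ i ∈ Finset.range j, (N : ℝ) ^ i) * Lw) := by
              rw [hcard]
      have hgeom : ∑ i ∈ Finset.range (j + 1), (N : ℝ) ^ i =
          (N : ℝ) * (∑ i ∈ Finset.range j, (N : ℝ) ^ i) + 1 := by
        rw [Finset.sum_range_succ']
        simp only [pow_zero, pow_succ]
        rw [← Finset.sum_mul]
        ring
      rw [hgeom]
      calc C.P.condH (C.X m) A' ≤ C.P.condH Y A' := c1
        _ ≤ C.P.condH Y A - Lw := c8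
        _ ≤ (N : ℝ) * ((N : ℝ) ^ j * Lx -
            (∑ i ∈ Finset.range j, (N : ℝ) ^ i) * Lw) - Lw := by linarith
        _ = (N : ℝ) ^ (j + 1) * Lx -
            ((N : ℝ) * (∑ i ∈ Finset.range j, (N : ℝ) ^ i) + 1) * Lw := by
            rw [pow_succ]
            ring
  obtain ⟨s0, hs0⟩ := C.decSets_nonempty ⟨0, hK⟩
  have hcard0 : s0.card = N := C.decSets_card _ s0 hs0
  obtain ⟨m0, _⟩ : s0.Nonempty := Finset.card_pos.mp (by rw [hcard0]; exact hN)
  have h0 := C.P.condH_nonneg (C.X m0) (Wpre C K le_rfl)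
  have h1 := main K le_rfl m0
  have part1 : (∑ j ∈ Finset.range K, (N : ℝ) ^ j) * Lw ≤ (N : ℝ) ^ K * Lx := by
    linarith
  refine ⟨part1, ?_⟩
  have hNpos : (0 : ℝ) < (N : ℝ) := by
    exact_mod_cast Nat.lt_of_lt_of_le Nat.zero_lt_one hN
  have hgpos : 0 < ∑ j ∈ Finset.range K, (N : ℝ) ^ j := by
    refine Finset.sum_pos (fun i _ => by positivity) ?_
    exact Finset.nonempty_range_iff.mpr (by omega)
  have hsum_eq : ∑ j ∈ Finset.range K, (1 / (N : ℝ)) ^ j =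
      (∑ j ∈ Finset.range K, (N : ℝ) ^ j) / (N : ℝ) ^ (K - 1) := by
    rw [eq_div_iff (by positivity)]
    rw [Finset.sum_mul, ← Finset.sum_range_reflect (fun j => (N : ℝ) ^ j) K]
    refine Finset.sum_congr rfl fun j hj => ?_
    have hjK : j < K := Finset.mem_range.mp hj
    rw [one_div, inv_pow, show K - 1 = K - 1 - j + j from by omega, pow_add]
    field_simp
    rw [Nat.add_sub_cancel]
  have hCstar : Cstar N K = (N : ℝ) ^ K / (∑ j ∈ Finset.range K, (N : ℝ) ^ j) := by
    unfold Cstar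
    rw [hsum_eq, div_div_eq_mul_div,
      show (N : ℝ) * (N : ℝ) ^ (K - 1) = (N : ℝ) ^ K from by
        rw [← pow_succ']
        congr 1
        omega]
  rw [hCstar, div_le_div_iff₀ hLx hgpos]
  linarith [part1]
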